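/- Let b be a real number with 0 < b, let n, f, m be natural numbers with m < 2^n. Then b^(−m / 2^f) = ∏_{j=0}^{n-1} c_j, where c_j = (b⁻¹)^(2^j / 2^f) if the j-th bit of m is 1 and c_j = 1 otherwise. Here all exponentiations with real exponents are real powers (rpow). -/
import Mathlib

lemma nat_eq_sum_testBit (n : ℕ) : ∀ m : ℕ, m < 2 ^ n →
    (m : ℝ) = ∑ j ∈ Finset.range n, (if Nat.testBit m j then (2:ℝ) ^ j else 0) := by
  induction n with
  | zero => intro m hm; interval_cases m <;> simp
  | succ n ih =>
    intro m hm
    have h2 : m / 2 < 2 ^ n := Nat.div_lt_of_lt_mul (by rw [pow_succ] at hm; omega)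
    have ihd := ih (m / 2) h2
    have key : (m : ℝ) = 2 * ((m / 2 : ℕ) : ℝ) + ((m % 2 : ℕ) : ℝ) := by
      exact_mod_cast congrArg (Nat.cast : ℕ → ℝ) (Nat.div_add_mod m 2).symm
    have hsum : ∑ j ∈ Finset.range n, (if Nat.testBit m (j+1) then (2:ℝ) ^ (j+1) else 0)
        = 2 * ∑ j ∈ Finset.range n, (if Nat.testBit (m / 2) j then (2:ℝ) ^ j else 0) := by
      rw [Finset.mul_sum]
      refine Finset.sum_congr rfl fun j _ => ?_
      rw [Nat.testBit_succ]
      split <;> ring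
    have hbit : (if Nat.testBit m 0 then (2:ℝ) ^ 0 else 0) = ((m % 2 : ℕ) : ℝ) := by
      rcases Nat.mod_two_eq_zero_or_one m with h | h <;>
        simp [Nat.testBit_zero, h, Nat.mod_two_ne_one.mpr]
    rw [Finset.sum_range_succ' _ n, hsum, ← ihd, hbit, key]

/-- Correctness of EXP for negative fixed-point powers. -/
theorem exp_correct_neg (b : ℝ) (hb : 0 < b) (n f m : ℕ) (hm : m < 2 ^ n) :
    b ^ (-(m : ℝ) / 2 ^ f) =
      ∏ j ∈ Finset.range n,
        (if Nat.testBit m j then b⁻¹ ^ ((2 ^ j : ℝ) / 2 ^ f) else 1) := by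
  have hc : (0:ℝ) < b⁻¹ := inv_pos.mpr hb
  have h1 : b ^ (-(m : ℝ) / 2 ^ f) = b⁻¹ ^ ((m : ℝ) / 2 ^ f) := by
    rw [Real.inv_rpow hb.le, ← Real.rpow_neg hb.le, neg_div]
  rw [h1, nat_eq_sum_testBit n m hm, Finset.sum_div,
    Real.rpow_sum_of_pos hc]
  refine Finset.prod_congr rfl fun j _ => ?_
  rcases Nat.testBit m j <;> simp
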